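/- Let S be a finite multiset of positive integers and k ≥ 2. Suppose we have a complete bipartite graph with donors indexed by S (donor i having weight x_i on every edge) and k recipients, all with normalization score 1. Then there exists a nonempty matching (each donor matched to at most one recipient, at least one donor matched) in which every recipient receives the same total matched weight if and only if there exist k pairwise disjoint nonempty subsets S_1,...,S_k of S with equal sums. -/

import Mathlib

/-- k-EQUAL-SUM-SUBSET reduction core: a nonempty matching of donors (with positive
integer weights `x`) to `k` recipients in which all recipients receive equal total
weight exists iff there are `k` pairwise disjoint nonempty subsets of equal sum. -/
theorem stmt_0 (ι : Type) [Fintype ι] [DecidableEq ι]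
    (x : ι → ℕ) (hx : ∀ i, 0 < x i) (k : ℕ) (hk : 2 ≤ k) :
    (∃ f : ι → Option (Fin k),
        (∃ i, f i ≠ none) ∧
        (∀ r r' : Fin k,
          ∑ i ∈ Finset.univ.filter (fun i => f i = some r), x i =
          ∑ i ∈ Finset.univ.filter (fun i => f i = some r'), x i)) ↔
    (∃ S : Fin k → Finset ι,
        (∀ j, (S j).Nonempty) ∧
        (∀ j j', j ≠ j' → Disjoint (S j) (S j')) ∧
        (∀ j j', ∑ i ∈ S j, x i = ∑ i ∈ S j', x i)) := by
  classical
  constructor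
  · rintro ⟨f, ⟨i₀, hi₀⟩, hsum⟩
    obtain ⟨r₀, hr₀⟩ := Option.ne_none_iff_exists'.mp hi₀
    refine ⟨fun j => Finset.univ.filter (fun i => f i = some j), ?_, ?_, fun j j' => hsum j j'⟩
    · intro j
      by_contra h
      rw [Finset.not_nonempty_iff_eq_empty] at h
      have h1 := hsum j r₀
      simp only at h
      rw [h, Finset.sum_empty] at h1
      have h2 : 0 < ∑ i ∈ Finset.univ.filter (fun i => f i = some r₀), x i :=
        Finset.sum_pos' (fun i _ => Nat.zero_le _)
          ⟨i₀, Finset.mem_filter.mpr ⟨Finset.mem_univ _, hr₀⟩, hx i₀⟩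
      omega
    · intro j j' hne
      simp only [Finset.disjoint_left, Finset.mem_filter, Finset.mem_univ, true_and]
      intro a ha ha'
      rw [ha] at ha'
      exact hne (Option.some_injective _ ha')
  · rintro ⟨S, hne, hdis, hsum⟩
    set f : ι → Option (Fin k) := fun i => if h : ∃ j, i ∈ S j then some h.choose else none
      with hf
    have key : ∀ r, Finset.univ.filter (fun i => f i = some r) = S r := by
      intro r
      ext i
      simp only [Finset.mem_filter, Finset.mem_univ, true_and, hf]
      constructor
      · intro h
        by_cases hex : ∃ j, i ∈ S j
        · rw [dif_pos hex] at h
          have := hex.choose_spec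
          rwa [Option.some_injective _ h] at this
        · rw [dif_neg hex] at h
          exact absurd h (by simp)
      · intro h
        have hex : ∃ j, i ∈ S j := ⟨r, h⟩
        rw [dif_pos hex]
        congr 1
        by_contra hne'
        exact (Finset.disjoint_left.mp (hdis _ _ hne') hex.choose_spec) h
    obtain ⟨i₀, hi₀⟩ := hne ⟨0, by omega⟩
    have hex₀ : ∃ j, i₀ ∈ S j := ⟨_, hi₀⟩
    refine ⟨f, ⟨i₀, ?_⟩, fun r r' => by rw [key, key]; exact hsum r r'⟩
    simp [hf, dif_pos hex₀]
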